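/- Let X ∼ N(0, σ²) with σ > 0 and c > 0. Then E[ (max(|X| − c, 0))² ] = 2(σ² + c²) Q(c/σ) − 2cσ/√(2π) · e^{−c²/(2σ²)}, where Q(t) = ∫_t^∞ (1/√(2π)) e^{−u²/2} du. -/

import Mathlib

open MeasureTheory

/-- The standard normal density. -/
noncomputable def stdGaussianPDF (u : ℝ) : ℝ :=
  (Real.sqrt (2 * Real.pi))⁻¹ * Real.exp (-u^2 / 2)

/-- The Gaussian tail function `Q(t) = ∫_t^∞ φ(u) du`. -/
noncomputable def gaussQ (t : ℝ) : ℝ := ∫ u in Set.Ioi t, stdGaussianPDF u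

/-- The `N(0,σ²)` density. -/
noncomputable def gaussPDF (σ x : ℝ) : ℝ :=
  (σ * Real.sqrt (2 * Real.pi))⁻¹ * Real.exp (-x^2 / (2*σ^2))

section Aux

open Real Set Filter Topology

variable {σ : ℝ}

private lemma pdf_eq' (x : ℝ) : gaussPDF σ x
    = (σ * Real.sqrt (2 * Real.pi))⁻¹ * Real.exp (-(2*σ^2)⁻¹ * x^2) := by
  rw [gaussPDF]; congr 1; rw [div_eq_mul_inv]; ring

private lemma int_I0 (hσ : 0 < σ) : Integrable (gaussPDF σ) := by
  have hb : (0:ℝ) < (2*σ^2)⁻¹ := inv_pos.mpr (by positivity)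
  have := (integrable_exp_neg_mul_sq hb).const_mul (σ * Real.sqrt (2 * Real.pi))⁻¹
  exact this.congr (by filter_upwards with x using (pdf_eq' x).symm)

private lemma int_I1 (hσ : 0 < σ) : Integrable (fun x => x * gaussPDF σ x) := by
  have hb : (0:ℝ) < (2*σ^2)⁻¹ := inv_pos.mpr (by positivity)
  have := (integrable_mul_exp_neg_mul_sq hb).const_mul (σ * Real.sqrt (2 * Real.pi))⁻¹
  exact this.congr (by filter_upwards with x; rw [pdf_eq']; ring)

private lemma int_I2 (hσ : 0 < σ) : Integrable (fun x => x^2 * gaussPDF σ x) := by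
  have hb : (0:ℝ) < (2*σ^2)⁻¹ := inv_pos.mpr (by positivity)
  have h := integrable_rpow_mul_exp_neg_mul_sq hb (show (-1:ℝ) < 2 by norm_num)
  simp only [show ((2:ℝ)) = ((2:ℕ):ℝ) by norm_num, Real.rpow_natCast] at h
  have := h.const_mul (σ * Real.sqrt (2 * Real.pi))⁻¹
  exact this.congr (by filter_upwards with x; rw [pdf_eq']; ring)

private lemma hpdf_deriv (hσ : 0 < σ) (x : ℝ) :
    HasDerivAt (gaussPDF σ) (-x/σ^2 * gaussPDF σ x) x := by
  have h1 : HasDerivAt (fun y : ℝ => -y^2/(2*σ^2)) (-x/σ^2) x := by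
    have := ((hasDerivAt_pow 2 x).neg).div_const (2*σ^2)
    refine this.congr_deriv ?_
    field_simp
    ring
  have h2 := h1.exp.const_mul (σ * Real.sqrt (2 * Real.pi))⁻¹
  have hfun : (gaussPDF σ) = fun y => (σ * Real.sqrt (2 * Real.pi))⁻¹
      * Real.exp (-y^2/(2*σ^2)) := rfl
  rw [hfun]
  refine h2.congr_deriv ?_
  beta_reduce
  ring

private lemma tendsto_pdf (hσ : 0 < σ) : Tendsto (gaussPDF σ) atTop (𝓝 0) := by
  have h2 : Tendsto (fun x : ℝ => x^2/(2*σ^2)) atTop atTop :=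
    (tendsto_pow_atTop two_ne_zero).atTop_div_const (by positivity)
  have h1 : Tendsto (fun x : ℝ => -x^2/(2*σ^2)) atTop atBot := by
    simpa [neg_div] using tendsto_neg_atBot_iff.mpr h2
  have h3 := (Real.tendsto_exp_atBot.comp h1).const_mul (σ * Real.sqrt (2 * Real.pi))⁻¹
  rw [mul_zero] at h3
  exact h3.congr fun x => rfl

private lemma tendsto_mul_pdf (hσ : 0 < σ) :
    Tendsto (fun x => x * gaussPDF σ x) atTop (𝓝 0) := by
  have hb : (0:ℝ) < (2*σ^2)⁻¹ := inv_pos.mpr (by positivity)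
  have hexp : Tendsto (fun x : ℝ => Real.exp (-(1/2) * x)) atTop (𝓝 0) := by
    refine Real.tendsto_exp_atBot.comp ?_
    have : Tendsto (fun x : ℝ => (1/2 : ℝ) * x) atTop atTop :=
      tendsto_id.const_mul_atTop one_half_pos
    exact (tendsto_neg_atBot_iff.mpr this).congr fun x => by ring
  have ho := (rpow_mul_exp_neg_mul_sq_isLittleO_exp_neg hb 1).trans_tendsto hexp
  have h3 : Tendsto (fun x : ℝ => x * Real.exp (-(2*σ^2)⁻¹ * x^2)) atTop (𝓝 0) := by
    simpa [Real.rpow_one] using ho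
  have := h3.const_mul (σ * Real.sqrt (2 * Real.pi))⁻¹
  rw [mul_zero] at this
  refine this.congr fun x => ?_
  rw [pdf_eq']; ring

/-- `∫_{c}^∞ x φ_σ(x) dx = σ² φ_σ(c)`. -/
private lemma tail_I1 (hσ : 0 < σ) (c : ℝ) :
    ∫ x in Set.Ioi c, x * gaussPDF σ x = σ^2 * gaussPDF σ c := by
  have hderiv : ∀ x ∈ Set.Ici c, HasDerivAt (fun y => -σ^2 * gaussPDF σ y)
      (x * gaussPDF σ x) x := by
    intro x _
    have := (hpdf_deriv hσ x).const_mul (-σ^2)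
    refine this.congr_deriv ?_
    field_simp
  have hten : Tendsto (fun y => -σ^2 * gaussPDF σ y) atTop (𝓝 0) := by
    have := (tendsto_pdf hσ).const_mul (-σ^2)
    simpa using this
  have := integral_Ioi_of_hasDerivAt_of_tendsto' hderiv
    ((int_I1 hσ).integrableOn) hten
  rw [this]
  ring

/-- `∫_{c}^∞ x² φ_σ(x) dx = c σ² φ_σ(c) + σ² ∫_{c}^∞ φ_σ`. -/
private lemma tail_I2 (hσ : 0 < σ) (c : ℝ) :
    ∫ x in Set.Ioi c, x^2 * gaussPDF σ x
      = c * σ^2 * gaussPDF σ c + σ^2 * ∫ x in Set.Ioi c, gaussPDF σ x := by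
  have hderiv : ∀ x ∈ Set.Ici c, HasDerivAt (fun y => -σ^2 * (y * gaussPDF σ y))
      (x^2 * gaussPDF σ x - σ^2 * gaussPDF σ x) x := by
    intro x _
    have hprod := (hasDerivAt_id x).mul (hpdf_deriv hσ x)
    have := hprod.const_mul (-σ^2)
    refine this.congr_deriv ?_
    field_simp
    simp only [id]; ring
  have hten : Tendsto (fun y => -σ^2 * (y * gaussPDF σ y)) atTop (𝓝 0) := by
    have := (tendsto_mul_pdf hσ).const_mul (-σ^2)
    simpa using this
  have hint : IntegrableOn (fun x => x^2 * gaussPDF σ x - σ^2 * gaussPDF σ x)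
      (Set.Ioi c) :=
    ((int_I2 hσ).sub ((int_I0 hσ).const_mul (σ^2))).integrableOn
  have key := integral_Ioi_of_hasDerivAt_of_tendsto' hderiv hint hten
  have hsub : (∫ x in Set.Ioi c, (x^2 * gaussPDF σ x - σ^2 * gaussPDF σ x))
      = (∫ x in Set.Ioi c, x^2 * gaussPDF σ x)
        - σ^2 * ∫ x in Set.Ioi c, gaussPDF σ x := by
    rw [integral_sub ((int_I2 hσ).integrableOn)
      (((int_I0 hσ).const_mul (σ^2)).integrableOn), integral_const_mul]
  rw [hsub] at key
  linarith [key]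

/-- `∫_{c}^∞ φ_σ(x) dx = Q(c/σ)`. -/
private lemma tail_I0 (hσ : 0 < σ) (c : ℝ) :
    ∫ x in Set.Ioi c, gaussPDF σ x = gaussQ (c/σ) := by
  have hpdf : ∀ x : ℝ, gaussPDF σ x = σ⁻¹ * stdGaussianPDF (σ⁻¹ * x) := by
    intro x
    rw [gaussPDF, stdGaussianPDF, mul_inv]
    rw [show -(σ⁻¹ * x)^2/2 = -x^2/(2*σ^2) by
      rw [mul_pow, inv_pow, div_eq_div_iff (by norm_num) (by positivity)]
      field_simp]
    ring
  simp_rw [hpdf]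
  rw [integral_const_mul, integral_comp_mul_left_Ioi stdGaussianPDF c (inv_pos.mpr hσ),
    smul_eq_mul]
  rw [gaussQ]
  have : σ⁻¹ * c = c / σ := by field_simp
  rw [this]
  field_simp

end Aux

/-- Second moment of a soft-thresholded centered Gaussian: for `X ∼ N(0,σ²)` and `c > 0`,
`E[(max(|X| − c, 0))²] = 2(σ² + c²) Q(c/σ) − (2cσ/√(2π)) e^{−c²/(2σ²)}`. -/
theorem stmt_10 (σ c : ℝ) (hσ : 0 < σ) (hc : 0 < c) :
    (∫ x : ℝ, (max (|x| - c) 0)^2 * gaussPDF σ x)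
      = 2*(σ^2 + c^2) * gaussQ (c/σ)
        - 2*c*σ/Real.sqrt (2*Real.pi) * Real.exp (-c^2/(2*σ^2)) := by
  classical
  -- Step 1: reduce to an integral over (c, ∞)
  have habs : ∀ x : ℝ, (max (|x| - c) 0)^2 * gaussPDF σ x
      = (fun t => (max (t - c) 0)^2 * gaussPDF σ t) |x| := by
    intro x
    simp only [gaussPDF, sq_abs]
  have step1 : (∫ x : ℝ, (max (|x| - c) 0)^2 * gaussPDF σ x)
      = 2 * ∫ x in Set.Ioi (0:ℝ), (max (x - c) 0)^2 * gaussPDF σ x := by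
    simp_rw [habs]
    exact integral_comp_abs (f := fun t => (max (t - c) 0)^2 * gaussPDF σ t)
  have hind : ∀ x : ℝ, (max (x - c) 0)^2 * gaussPDF σ x
      = (Set.Ioi c).indicator (fun t => (t - c)^2 * gaussPDF σ t) x := by
    intro x
    by_cases hx : c < x
    · rw [Set.indicator_of_mem (Set.mem_Ioi.mpr hx), max_eq_left (by linarith)]
    · rw [Set.indicator_of_notMem (by simpa using hx), max_eq_right (by push_neg at hx; linarith)]
      ring
  have step2 : (∫ x in Set.Ioi (0:ℝ), (max (x - c) 0)^2 * gaussPDF σ x)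
      = ∫ x in Set.Ioi c, (x - c)^2 * gaussPDF σ x := by
    simp_rw [hind]
    rw [setIntegral_indicator measurableSet_Ioi]
    congr 1
    rw [Set.Ioi_inter_Ioi, max_eq_right hc.le]
  -- Step 2: expand the square
  have expand : ∀ x : ℝ, (x - c)^2 * gaussPDF σ x
      = x^2 * gaussPDF σ x - 2*c*(x * gaussPDF σ x) + c^2 * gaussPDF σ x := by
    intro x; ring
  have step3 : (∫ x in Set.Ioi c, (x - c)^2 * gaussPDF σ x)
      = (∫ x in Set.Ioi c, x^2 * gaussPDF σ x)
        - 2*c*(∫ x in Set.Ioi c, x * gaussPDF σ x)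
        + c^2 * ∫ x in Set.Ioi c, gaussPDF σ x := by
    simp_rw [expand]
    have hA : IntegrableOn (fun x => x^2 * gaussPDF σ x - 2*c*(x * gaussPDF σ x))
        (Set.Ioi c) :=
      ((int_I2 hσ).sub ((int_I1 hσ).const_mul (2*c))).integrableOn
    have hB : IntegrableOn (fun x => c^2 * gaussPDF σ x) (Set.Ioi c) :=
      ((int_I0 hσ).const_mul (c^2)).integrableOn
    rw [integral_add hA hB,
      integral_sub ((int_I2 hσ).integrableOn)
        (((int_I1 hσ).const_mul (2*c)).integrableOn),
      integral_const_mul, integral_const_mul]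
  rw [step1, step2, step3, tail_I1 hσ c, tail_I2 hσ c, tail_I0 hσ c]
  -- final algebra
  have hpdfc : gaussPDF σ c = (σ * Real.sqrt (2 * Real.pi))⁻¹
      * Real.exp (-c^2/(2*σ^2)) := rfl
  rw [hpdfc]
  have hs : Real.sqrt (2 * Real.pi) ≠ 0 := by positivity
  field_simp
  ring
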